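/- There is an absolute constant C > 0 such that the following holds: for every odd prime p, all functions h, h₃ : 𝔽_p → [0,1], and all distinct x, y ∈ 𝔽_p with h₃(n) = h(n) for every n ∉ {x, y}, one has | Λ(h₃) − Λ(h) − p^{−2}·(h₃(x) − h(x))·F_h(x) − p^{−2}·(h₃(y) − h(y))·F_h(y) | ≤ C·p^{−2}. Here F_h(n) := (h∗h)(2n) + 2·(h∗h₂)(−n), where h₂(m) := h(−m/2) (with −m/2 computed in 𝔽_p). -/

import Mathlib

noncomputable def Lam (p : ℕ) [NeZero p] (f : ZMod p → ℝ) : ℝ :=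
  ((p : ℝ) ^ 2)⁻¹ * ∑ n : ZMod p, ∑ d : ZMod p, f n * f (n + d) * f (n + 2 * d)

noncomputable def conv (p : ℕ) [NeZero p] (u v : ZMod p → ℝ) (m : ZMod p) : ℝ :=
  ∑ k : ZMod p, u k * v (m - k)

/-- `F h n = (h∗h)(2n) + 2 (h∗h₂)(−n)` where `h₂(m) = h(−m/2)`. -/
noncomputable def Fh (p : ℕ) [NeZero p] (h : ZMod p → ℝ) (n : ZMod p) : ℝ :=
  conv p h h (2 * n) + 2 * conv p h (fun m => h (-m * (2 : ZMod p)⁻¹)) (-n)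

section Helpers
variable {p : ℕ} [Fact p.Prime]

lemma myTwoNe (hp : Odd p) : (2 : ZMod p) ≠ 0 := by
  have hp2 : p ≠ 2 := by rintro rfl; exact (Nat.not_odd_iff_even.mpr (by norm_num)) hp
  have : ((2:ℕ) : ZMod p) ≠ 0 := by
    rw [Ne, ZMod.natCast_eq_zero_iff]
    intro hdvd
    exact hp2 (Nat.le_antisymm (Nat.le_of_dvd two_pos hdvd) (Fact.out : p.Prime).two_le)
  simpa using this

lemma mySumShift (n : ZMod p) (f : ZMod p → ℝ) : ∑ d, f (n + d) = ∑ k, f k :=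
  Fintype.sum_equiv (Equiv.addLeft n) _ _ (fun _ => rfl)

lemma mySumShift2 (hp : Odd p) (n : ZMod p) (f : ZMod p → ℝ) :
    ∑ d, f (n + 2*d) = ∑ k, f k := by
  have h2 := myTwoNe hp
  have hinj : Function.Injective (fun d : ZMod p => n + 2*d) := by
    intro a b hab
    exact mul_left_cancel₀ h2 (add_left_cancel hab)
  exact Fintype.sum_bijective _ (Finite.injective_iff_bijective.mp hinj) _ _ (fun _ => rfl)

lemma myIndSum (b : ZMod p) : ∑ k : ZMod p, (if k = b then (1:ℝ) else 0) = 1 := by simp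

lemma mySAB (a b : ZMod p) :
    ∑ n : ZMod p, ∑ d : ZMod p,
      (if n = a then (1:ℝ) else 0) * (if n + d = b then 1 else 0) = 1 := by
  have inner : ∀ n : ZMod p, ∑ d : ZMod p, (if n + d = b then (1:ℝ) else 0) = 1 := fun n => by
    rw [mySumShift n (fun k => if k = b then (1:ℝ) else 0)]; exact myIndSum b
  calc ∑ n : ZMod p, ∑ d : ZMod p, (if n = a then (1:ℝ) else 0) * (if n + d = b then 1 else 0)
      = ∑ n : ZMod p, (if n = a then (1:ℝ) else 0) *
          ∑ d : ZMod p, (if n + d = b then (1:ℝ) else 0) := by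
        simp only [Finset.mul_sum]
    _ = ∑ n : ZMod p, (if n = a then (1:ℝ) else 0) := by
        refine Finset.sum_congr rfl fun n _ => ?_; rw [inner n, mul_one]
    _ = 1 := myIndSum a

lemma mySAC (hp : Odd p) (a b : ZMod p) :
    ∑ n : ZMod p, ∑ d : ZMod p,
      (if n = a then (1:ℝ) else 0) * (if n + 2*d = b then 1 else 0) = 1 := by
  have inner : ∀ n : ZMod p, ∑ d : ZMod p, (if n + 2*d = b then (1:ℝ) else 0) = 1 := fun n => by
    rw [mySumShift2 hp n (fun k => if k = b then (1:ℝ) else 0)]; exact myIndSum b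
  calc ∑ n : ZMod p, ∑ d : ZMod p, (if n = a then (1:ℝ) else 0) * (if n + 2*d = b then 1 else 0)
      = ∑ n : ZMod p, (if n = a then (1:ℝ) else 0) *
          ∑ d : ZMod p, (if n + 2*d = b then (1:ℝ) else 0) := by
        simp only [Finset.mul_sum]
    _ = ∑ n : ZMod p, (if n = a then (1:ℝ) else 0) := by
        refine Finset.sum_congr rfl fun n _ => ?_; rw [inner n, mul_one]
    _ = 1 := myIndSum a

lemma mySBC (a b : ZMod p) :
    ∑ n : ZMod p, ∑ d : ZMod p,
      (if n + d = a then (1:ℝ) else 0) * (if n + 2*d = b then 1 else 0) = 1 := by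
  rw [Finset.sum_comm]
  have inner : ∀ d : ZMod p,
      ∑ n : ZMod p, (if n + d = a then (1:ℝ) else 0) * (if n + 2*d = b then 1 else 0)
        = (if a + d = b then (1:ℝ) else 0) := by
    intro d
    have : ∀ n : ZMod p,
        (if n + d = a then (1:ℝ) else 0) * (if n + 2*d = b then 1 else 0)
          = if n = a - d then (if n + 2*d = b then (1:ℝ) else 0) else 0 := by
      intro n
      by_cases hn : n = a - d
      · subst hn; simp [sub_add_cancel]
      · have : n + d ≠ a := fun h => hn (by rw [← h]; ring)
        simp [hn, this]
    rw [Finset.sum_congr rfl fun n _ => this n, Finset.sum_ite_eq' Finset.univ (a - d)]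
    simp only [Finset.mem_univ, if_true]
    congr 1
    · rw [show a - d + 2*d = a + d by ring]
  rw [Finset.sum_congr rfl fun d _ => inner d]
  rw [mySumShift a (fun k => if k = b then (1:ℝ) else 0)]
  exact myIndSum b

/-- key convolution identity: ∑_d h(n+d) h(n+2d) = (h ∗ h₂)(−n) -/
lemma myConvId (hp : Odd p) (h : ZMod p → ℝ) (n : ZMod p) :
    ∑ d : ZMod p, h (n + d) * h (n + 2*d)
      = conv p h (fun m => h (-m * (2 : ZMod p)⁻¹)) (-n) := by
  have h2 := myTwoNe hp
  have key : ∀ z : ZMod p, (2*z) * (2:ZMod p)⁻¹ = z := fun z => by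
    rw [mul_comm, ← mul_assoc, inv_mul_cancel₀ h2, one_mul]
  have lhs : ∑ d : ZMod p, h (n + d) * h (n + 2*d)
      = ∑ k : ZMod p, h ((n + k) * (2:ZMod p)⁻¹) * h k := by
    rw [← mySumShift2 hp n (fun z => h ((n + z) * (2:ZMod p)⁻¹) * h z)]
    refine Finset.sum_congr rfl fun d _ => ?_
    congr 2
    rw [show n + (n + 2*d) = 2*(n + d) by ring, key]
  rw [lhs]
  unfold conv
  refine Finset.sum_congr rfl fun k _ => ?_
  rw [mul_comm]
  congr 2
  ring

end Helpers

lemma myBnd3 {a b c A B : ℝ} (ha : |a| ≤ A) (hb : |b| ≤ B) (hc : |c| ≤ 1) :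
    |a * b * c| ≤ A * B := by
  rw [abs_mul, abs_mul]
  have h1 : |a| * |b| ≤ A * B :=
    mul_le_mul ha hb (abs_nonneg b) ((abs_nonneg a).trans ha)
  have h2 : |a| * |b| * |c| ≤ (A * B) * 1 :=
    mul_le_mul h1 hc (abs_nonneg c)
      (mul_nonneg ((abs_nonneg a).trans ha) ((abs_nonneg b).trans hb))
  simpa using h2

theorem stmt_11 :
    ∃ C : ℝ, 0 < C ∧
      ∀ (p : ℕ) [Fact p.Prime], Odd p →
        ∀ h h₃ : ZMod p → ℝ,
          (∀ n, h n ∈ Set.Icc (0 : ℝ) 1) → (∀ n, h₃ n ∈ Set.Icc (0 : ℝ) 1) →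
          ∀ x y : ZMod p, x ≠ y →
            (∀ n, n ≠ x → n ≠ y → h₃ n = h n) →
            |Lam p h₃ - Lam p h - ((p : ℝ) ^ 2)⁻¹ * (h₃ x - h x) * Fh p h x
                - ((p : ℝ) ^ 2)⁻¹ * (h₃ y - h y) * Fh p h y| ≤ C * ((p : ℝ) ^ 2)⁻¹ := by
  refine ⟨16, by norm_num, ?_⟩
  intro p _ hp h h₃ hh hh3 x y hxy hagree
  have h2 := myTwoNe hp
  have key : ∀ z : ZMod p, (2*z) * (2:ZMod p)⁻¹ = z := fun z => by
    rw [mul_comm, ← mul_assoc, inv_mul_cancel₀ h2, one_mul]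
  -- basic bounds
  have hb1 : ∀ t, |h₃ t - h t| ≤ 1 := fun t => by
    have h1 := hh t; have h2 := hh3 t
    rw [Set.mem_Icc] at h1 h2
    rw [abs_le]; constructor <;> linarith
  have hbh : ∀ t, |h t| ≤ 1 := fun t => by
    have h1 := hh t; rw [Set.mem_Icc] at h1
    rw [abs_le]; constructor <;> linarith
  have habs : ∀ t, |h₃ t - h t| ≤
      (if t = x then (1:ℝ) else 0) + (if t = y then (1:ℝ) else 0) := by
    intro t
    by_cases tx : t = x
    · have h0 : (0:ℝ) ≤ (if t = y then (1:ℝ) else 0) := by split_ifs <;> norm_num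
      rw [if_pos tx]; have := hb1 t; linarith
    · by_cases ty : t = y
      · rw [if_neg tx, if_pos ty]; have := hb1 t; linarith
      · rw [if_neg tx, if_neg ty, hagree t tx ty, sub_self, abs_zero]; norm_num
  -- decomposition of the triple product
  have hsplit : (∑ n : ZMod p, ∑ d : ZMod p, h₃ n * h₃ (n + d) * h₃ (n + 2 * d)) =
      (∑ n : ZMod p, ∑ d : ZMod p, h n * h (n + d) * h (n + 2 * d))
    + ((∑ n : ZMod p, ∑ d : ZMod p, (h₃ n - h n) * h (n + d) * h (n + 2 * d))
    + ((∑ n : ZMod p, ∑ d : ZMod p, h n * (h₃ (n + d) - h (n + d)) * h (n + 2 * d))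
    + ((∑ n : ZMod p, ∑ d : ZMod p, h n * h (n + d) * (h₃ (n + 2 * d) - h (n + 2 * d)))
    + (∑ n : ZMod p, ∑ d : ZMod p,
        ((h₃ n - h n) * (h₃ (n + d) - h (n + d)) * h (n + 2 * d)
          + (h₃ n - h n) * h (n + d) * (h₃ (n + 2 * d) - h (n + 2 * d))
          + h n * (h₃ (n + d) - h (n + d)) * (h₃ (n + 2 * d) - h (n + 2 * d))
          + (h₃ n - h n) * (h₃ (n + d) - h (n + d)) * (h₃ (n + 2 * d) - h (n + 2 * d))))))) := by
    simp only [← Finset.sum_add_distrib]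
    exact Finset.sum_congr rfl fun n _ => Finset.sum_congr rfl fun d _ => by ring
  -- linear term 1
  have hL1 : (∑ n : ZMod p, ∑ d : ZMod p, (h₃ n - h n) * h (n + d) * h (n + 2 * d))
      = ∑ z : ZMod p, (h₃ z - h z) * conv p h (fun m => h (-m * (2 : ZMod p)⁻¹)) (-z) := by
    refine Finset.sum_congr rfl fun n _ => ?_
    rw [← myConvId hp h n, Finset.mul_sum]
    exact Finset.sum_congr rfl fun d _ => (mul_assoc _ _ _)
  -- linear term 2
  have hL2 : (∑ n : ZMod p, ∑ d : ZMod p, h n * (h₃ (n + d) - h (n + d)) * h (n + 2 * d))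
      = ∑ z : ZMod p, (h₃ z - h z) * conv p h h (2 * z) := by
    have step1 : ∀ n : ZMod p,
        ∑ d : ZMod p, h n * (h₃ (n + d) - h (n + d)) * h (n + 2 * d)
          = ∑ z : ZMod p, h n * (h₃ z - h z) * h (2 * z - n) := by
      intro n
      rw [← mySumShift n (fun z => h n * (h₃ z - h z) * h (2 * z - n))]
      refine Finset.sum_congr rfl fun d _ => ?_
      congr 1
      congr 1
      ring
    rw [Finset.sum_congr rfl fun n _ => step1 n, Finset.sum_comm]
    refine Finset.sum_congr rfl fun z _ => ?_
    rw [show conv p h h (2 * z) = ∑ k : ZMod p, h k * h (2 * z - k) from rfl, Finset.mul_sum]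
    exact Finset.sum_congr rfl fun n _ => by ring
  -- linear term 3
  have hL3 : (∑ n : ZMod p, ∑ d : ZMod p, h n * h (n + d) * (h₃ (n + 2 * d) - h (n + 2 * d)))
      = ∑ z : ZMod p, (h₃ z - h z) * conv p h (fun m => h (-m * (2 : ZMod p)⁻¹)) (-z) := by
    have step1 : ∀ n : ZMod p,
        ∑ d : ZMod p, h n * h (n + d) * (h₃ (n + 2 * d) - h (n + 2 * d))
          = ∑ z : ZMod p, h n * h ((n + z) * (2 : ZMod p)⁻¹) * (h₃ z - h z) := by
      intro n
      rw [← mySumShift2 hp n (fun z => h n * h ((n + z) * (2 : ZMod p)⁻¹) * (h₃ z - h z))]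
      refine Finset.sum_congr rfl fun d _ => ?_
      congr 2
      rw [show n + (n + 2 * d) = 2 * (n + d) by ring, key]
    rw [Finset.sum_congr rfl fun n _ => step1 n, Finset.sum_comm]
    refine Finset.sum_congr rfl fun z _ => ?_
    rw [show conv p h (fun m => h (-m * (2 : ZMod p)⁻¹)) (-z)
          = ∑ k : ZMod p, h k * h ((z + k) * (2 : ZMod p)⁻¹) from
        Finset.sum_congr rfl fun k _ => by
          show h k * h (-(-z - k) * (2 : ZMod p)⁻¹) = h k * h ((z + k) * (2 : ZMod p)⁻¹)
          rw [show -(-z - k) = z + k by ring], Finset.mul_sum]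
    refine Finset.sum_congr rfl fun n _ => ?_
    rw [add_comm n z]
    ring
  -- combining linear terms
  have hlin : (∑ z : ZMod p, (h₃ z - h z) * conv p h (fun m => h (-m * (2 : ZMod p)⁻¹)) (-z))
      + (∑ z : ZMod p, (h₃ z - h z) * conv p h h (2 * z))
      + (∑ z : ZMod p, (h₃ z - h z) * conv p h (fun m => h (-m * (2 : ZMod p)⁻¹)) (-z))
      = ∑ z : ZMod p, (h₃ z - h z) * Fh p h z := by
    rw [← Finset.sum_add_distrib, ← Finset.sum_add_distrib]
    refine Finset.sum_congr rfl fun z _ => ?_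
    show _ = (h₃ z - h z) *
      (conv p h h (2 * z) + 2 * conv p h (fun m => h (-m * (2 : ZMod p)⁻¹)) (-z))
    ring
  -- support
  have hsupp : (∑ z : ZMod p, (h₃ z - h z) * Fh p h z)
      = (h₃ x - h x) * Fh p h x + (h₃ y - h y) * Fh p h y := by
    rw [← Finset.sum_pair (f := fun z => (h₃ z - h z) * Fh p h z) hxy]
    refine (Finset.sum_subset (Finset.subset_univ _) fun z _ hz => ?_).symm
    simp only [Finset.mem_insert, Finset.mem_singleton] at hz
    push_neg at hz
    rw [hagree z hz.1 hz.2, sub_self, zero_mul]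
  -- error bound
  have e1 : ∑ n : ZMod p, ∑ d : ZMod p,
      ((if n = x then (1:ℝ) else 0) + (if n = y then (1:ℝ) else 0))
        * ((if n + d = x then (1:ℝ) else 0) + (if n + d = y then (1:ℝ) else 0)) = 4 := by
    simp only [add_mul, mul_add, Finset.sum_add_distrib]
    rw [mySAB x x, mySAB x y, mySAB y x, mySAB y y]; norm_num
  have e2 : ∑ n : ZMod p, ∑ d : ZMod p,
      ((if n = x then (1:ℝ) else 0) + (if n = y then (1:ℝ) else 0))
        * ((if n + 2*d = x then (1:ℝ) else 0) + (if n + 2*d = y then (1:ℝ) else 0)) = 4 := by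
    simp only [add_mul, mul_add, Finset.sum_add_distrib]
    rw [mySAC hp x x, mySAC hp x y, mySAC hp y x, mySAC hp y y]; norm_num
  have e3 : ∑ n : ZMod p, ∑ d : ZMod p,
      ((if n + d = x then (1:ℝ) else 0) + (if n + d = y then (1:ℝ) else 0))
        * ((if n + 2*d = x then (1:ℝ) else 0) + (if n + 2*d = y then (1:ℝ) else 0)) = 4 := by
    simp only [add_mul, mul_add, Finset.sum_add_distrib]
    rw [mySBC x x, mySBC x y, mySBC y x, mySBC y y]; norm_num
  have hErr : |∑ n : ZMod p, ∑ d : ZMod p,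
      ((h₃ n - h n) * (h₃ (n + d) - h (n + d)) * h (n + 2 * d)
        + (h₃ n - h n) * h (n + d) * (h₃ (n + 2 * d) - h (n + 2 * d))
        + h n * (h₃ (n + d) - h (n + d)) * (h₃ (n + 2 * d) - h (n + 2 * d))
        + (h₃ n - h n) * (h₃ (n + d) - h (n + d)) * (h₃ (n + 2 * d) - h (n + 2 * d)))| ≤ 16 := by
    have pw : ∀ n d : ZMod p,
        |(h₃ n - h n) * (h₃ (n + d) - h (n + d)) * h (n + 2 * d)
          + (h₃ n - h n) * h (n + d) * (h₃ (n + 2 * d) - h (n + 2 * d))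
          + h n * (h₃ (n + d) - h (n + d)) * (h₃ (n + 2 * d) - h (n + 2 * d))
          + (h₃ n - h n) * (h₃ (n + d) - h (n + d)) * (h₃ (n + 2 * d) - h (n + 2 * d))|
        ≤ ((if n = x then (1:ℝ) else 0) + (if n = y then (1:ℝ) else 0))
            * ((if n + d = x then (1:ℝ) else 0) + (if n + d = y then (1:ℝ) else 0))
          + ((if n = x then (1:ℝ) else 0) + (if n = y then (1:ℝ) else 0))
            * ((if n + 2*d = x then (1:ℝ) else 0) + (if n + 2*d = y then (1:ℝ) else 0))
          + ((if n + d = x then (1:ℝ) else 0) + (if n + d = y then (1:ℝ) else 0))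
            * ((if n + 2*d = x then (1:ℝ) else 0) + (if n + 2*d = y then (1:ℝ) else 0))
          + ((if n = x then (1:ℝ) else 0) + (if n = y then (1:ℝ) else 0))
            * ((if n + d = x then (1:ℝ) else 0) + (if n + d = y then (1:ℝ) else 0)) := by
      intro n d
      have t1 : |(h₃ n - h n) * (h₃ (n + d) - h (n + d)) * h (n + 2 * d)|
          ≤ ((if n = x then (1:ℝ) else 0) + (if n = y then (1:ℝ) else 0))
            * ((if n + d = x then (1:ℝ) else 0) + (if n + d = y then (1:ℝ) else 0)) :=
        myBnd3 (habs n) (habs (n + d)) (hbh (n + 2 * d))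
      have t2 : |(h₃ n - h n) * h (n + d) * (h₃ (n + 2 * d) - h (n + 2 * d))|
          ≤ ((if n = x then (1:ℝ) else 0) + (if n = y then (1:ℝ) else 0))
            * ((if n + 2*d = x then (1:ℝ) else 0) + (if n + 2*d = y then (1:ℝ) else 0)) := by
        rw [show (h₃ n - h n) * h (n + d) * (h₃ (n + 2 * d) - h (n + 2 * d))
              = (h₃ n - h n) * (h₃ (n + 2 * d) - h (n + 2 * d)) * h (n + d) by ring]
        exact myBnd3 (habs n) (habs (n + 2 * d)) (hbh (n + d))
      have t3 : |h n * (h₃ (n + d) - h (n + d)) * (h₃ (n + 2 * d) - h (n + 2 * d))|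
          ≤ ((if n + d = x then (1:ℝ) else 0) + (if n + d = y then (1:ℝ) else 0))
            * ((if n + 2*d = x then (1:ℝ) else 0) + (if n + 2*d = y then (1:ℝ) else 0)) := by
        rw [show h n * (h₃ (n + d) - h (n + d)) * (h₃ (n + 2 * d) - h (n + 2 * d))
              = (h₃ (n + d) - h (n + d)) * (h₃ (n + 2 * d) - h (n + 2 * d)) * h n by ring]
        exact myBnd3 (habs (n + d)) (habs (n + 2 * d)) (hbh n)
      have t4 : |(h₃ n - h n) * (h₃ (n + d) - h (n + d)) * (h₃ (n + 2 * d) - h (n + 2 * d))|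
          ≤ ((if n = x then (1:ℝ) else 0) + (if n = y then (1:ℝ) else 0))
            * ((if n + d = x then (1:ℝ) else 0) + (if n + d = y then (1:ℝ) else 0)) :=
        myBnd3 (habs n) (habs (n + d)) (hb1 (n + 2 * d))
      refine le_trans (abs_add_le _ _)
        (le_trans (add_le_add_left (abs_add_three _ _ _) _) ?_)
      linarith [t1, t2, t3, t4]
    calc |∑ n : ZMod p, ∑ d : ZMod p, _| ≤ ∑ n : ZMod p, ∑ d : ZMod p,
          |((h₃ n - h n) * (h₃ (n + d) - h (n + d)) * h (n + 2 * d)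
            + (h₃ n - h n) * h (n + d) * (h₃ (n + 2 * d) - h (n + 2 * d))
            + h n * (h₃ (n + d) - h (n + d)) * (h₃ (n + 2 * d) - h (n + 2 * d))
            + (h₃ n - h n) * (h₃ (n + d) - h (n + d)) * (h₃ (n + 2 * d) - h (n + 2 * d)))| :=
        (Finset.abs_sum_le_sum_abs _ _).trans
          (Finset.sum_le_sum fun n _ => Finset.abs_sum_le_sum_abs _ _)
      _ ≤ ∑ n : ZMod p, ∑ d : ZMod p,
          (((if n = x then (1:ℝ) else 0) + (if n = y then (1:ℝ) else 0))
            * ((if n + d = x then (1:ℝ) else 0) + (if n + d = y then (1:ℝ) else 0))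
          + ((if n = x then (1:ℝ) else 0) + (if n = y then (1:ℝ) else 0))
            * ((if n + 2*d = x then (1:ℝ) else 0) + (if n + 2*d = y then (1:ℝ) else 0))
          + ((if n + d = x then (1:ℝ) else 0) + (if n + d = y then (1:ℝ) else 0))
            * ((if n + 2*d = x then (1:ℝ) else 0) + (if n + 2*d = y then (1:ℝ) else 0))
          + ((if n = x then (1:ℝ) else 0) + (if n = y then (1:ℝ) else 0))
            * ((if n + d = x then (1:ℝ) else 0) + (if n + d = y then (1:ℝ) else 0))) :=
        Finset.sum_le_sum fun n _ => Finset.sum_le_sum fun d _ => pw n d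
      _ = 16 := by
        simp only [Finset.sum_add_distrib]
        rw [e1, e2, e3]; norm_num
  -- assembly
  have hppos : (0:ℝ) < (p:ℝ) ^ 2 := by
    have := (Fact.out : p.Prime).pos
    positivity
  have heq : Lam p h₃ - Lam p h - ((p : ℝ) ^ 2)⁻¹ * (h₃ x - h x) * Fh p h x
      - ((p : ℝ) ^ 2)⁻¹ * (h₃ y - h y) * Fh p h y
      = ((p : ℝ) ^ 2)⁻¹ * ((∑ n : ZMod p, ∑ d : ZMod p, h₃ n * h₃ (n + d) * h₃ (n + 2 * d))
          - (∑ n : ZMod p, ∑ d : ZMod p, h n * h (n + d) * h (n + 2 * d))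
          - ((h₃ x - h x) * Fh p h x + (h₃ y - h y) * Fh p h y)) := by
    unfold Lam; ring
  rw [heq, abs_mul, abs_of_nonneg (le_of_lt (inv_pos.mpr hppos)), mul_comm]
  have hinner : (∑ n : ZMod p, ∑ d : ZMod p, h₃ n * h₃ (n + d) * h₃ (n + 2 * d))
      - (∑ n : ZMod p, ∑ d : ZMod p, h n * h (n + d) * h (n + 2 * d))
      - ((h₃ x - h x) * Fh p h x + (h₃ y - h y) * Fh p h y)
      = ∑ n : ZMod p, ∑ d : ZMod p,
        ((h₃ n - h n) * (h₃ (n + d) - h (n + d)) * h (n + 2 * d)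
          + (h₃ n - h n) * h (n + d) * (h₃ (n + 2 * d) - h (n + 2 * d))
          + h n * (h₃ (n + d) - h (n + d)) * (h₃ (n + 2 * d) - h (n + 2 * d))
          + (h₃ n - h n) * (h₃ (n + d) - h (n + d)) * (h₃ (n + 2 * d) - h (n + 2 * d))) := by
    rw [hsplit, hL1, hL2, hL3, ← hsupp, ← hlin]
    ring
  rw [hinner]
  exact mul_le_mul_of_nonneg_right hErr (le_of_lt (inv_pos.mpr hppos))
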